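/- arXiv:2605.21373 — 5 statements merged into one kernel-verified Lean document; each statement's English description precedes it below -/
import Mathlib

section
/- The sequence aₙ = (−1)ⁿ(n+1)(n+2) is of controlled growth: its power series equals 2/(1+x)³ on (−1,1) and (1−x)²·∑ₙ aₙxⁿ → 0 as x → 1⁻; but it is not of controlled absolute growth, since ∑ₙ |aₙ|xⁿ = 2/(1−x)³ and (1−x)²·∑ₙ|aₙ|xⁿ → ∞ as x → 1⁻. -/
open Filter Topology

/-- The Abel limit: `HasAbelLim a L` means the power series `∑ aₙ xⁿ` has radius of
convergence at least `1` (convergence for `|x| < 1`) and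
`(1 - x) * ∑ aₙ xⁿ → L` as `x → 1⁻`. -/
def HasAbelLim (a : ℕ → ℝ) (L : ℝ) : Prop :=
  (∀ x : ℝ, |x| < 1 → Summable fun n => a n * x ^ n) ∧
    Tendsto (fun x : ℝ => (1 - x) * ∑' n, a n * x ^ n) (𝓝[<] 1) (𝓝 L)

lemma aux_hasSum {r : ℝ} (hr : |r| < 1) :
    HasSum (fun n : ℕ => ((n : ℝ) + 1) * ((n : ℝ) + 2) * r ^ n) (2 / (1 - r) ^ 3) := by
  have h := (hasSum_choose_mul_geometric_of_norm_lt_one 2 (r := r)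
    (by simpa using hr)).mul_left 2
  have hf : (fun n : ℕ => 2 * (((n + 2).choose 2 : ℝ) * r ^ n))
      = fun n : ℕ => ((n : ℝ) + 1) * ((n : ℝ) + 2) * r ^ n := by
    funext n
    have h2nat : 2 * (n + 2).choose 2 = (n + 1) * (n + 2) := by
      rw [Nat.choose_two_right]
      have h1 : (n + 2) * (n + 2 - 1) = (n + 1) * (n + 2) := by
        simp [Nat.add_sub_cancel]; ring
      rw [h1, Nat.mul_div_cancel' (Even.two_dvd (Nat.even_mul_succ_self (n + 1)))]
    have hc : (2 : ℝ) * ((n + 2).choose 2 : ℝ) = ((n : ℝ) + 1) * ((n : ℝ) + 2) := by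
      have := congrArg (Nat.cast : ℕ → ℝ) h2nat
      push_cast at this
      linarith
    rw [← mul_assoc, hc]
  rw [hf] at h
  have hv : (2 : ℝ) * (1 / (1 - r) ^ (2 + 1)) = 2 / (1 - r) ^ 3 := by ring
  rwa [hv] at h

theorem stmt_8 (a : ℕ → ℝ) (ha : ∀ n, a n = (-1) ^ n * (n + 1) * (n + 2)) :
    (∀ x : ℝ, |x| < 1 → ∑' n, a n * x ^ n = 2 / (1 + x) ^ 3) ∧
    Tendsto (fun x : ℝ => (1 - x) ^ 2 * ∑' n, a n * x ^ n) (𝓝[<] 1) (𝓝 0) ∧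
    (∀ x : ℝ, |x| < 1 → ∑' n, |a n| * x ^ n = 2 / (1 - x) ^ 3) ∧
    Tendsto (fun x : ℝ => (1 - x) ^ 2 * ∑' n, |a n| * x ^ n) (𝓝[<] 1) atTop := by
  have h1 : ∀ x : ℝ, |x| < 1 → ∑' n, a n * x ^ n = 2 / (1 + x) ^ 3 := by
    intro x hx
    have hx' : |(-x)| < 1 := by rwa [abs_neg]
    have h := aux_hasSum hx'
    have : (fun n : ℕ => ((n : ℝ) + 1) * ((n : ℝ) + 2) * (-x) ^ n)
        = fun n => a n * x ^ n := by
      funext n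
      rw [ha n, neg_pow]; ring
    rw [this] at h
    rw [h.tsum_eq]
    norm_num
  have h3 : ∀ x : ℝ, |x| < 1 → ∑' n, |a n| * x ^ n = 2 / (1 - x) ^ 3 := by
    intro x hx
    have h := aux_hasSum hx
    have : (fun n : ℕ => ((n : ℝ) + 1) * ((n : ℝ) + 2) * x ^ n)
        = fun n => |a n| * x ^ n := by
      funext n
      rw [ha n, abs_mul, abs_mul]
      rw [abs_pow, abs_neg, abs_one, one_pow, one_mul]
      have h1 : |(n : ℝ) + 1| = (n : ℝ) + 1 := abs_of_nonneg (by positivity)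
      have h2 : |(n : ℝ) + 2| = (n : ℝ) + 2 := abs_of_nonneg (by positivity)
      rw [h1, h2]
    rw [this] at h
    exact h.tsum_eq
  have hmem : Set.Ioo (-1 : ℝ) 1 ∈ 𝓝[<] (1 : ℝ) := by
    rw [← Set.Ioi_inter_Iio]
    exact Filter.inter_mem
      (mem_nhdsWithin_of_mem_nhds (Ioi_mem_nhds (show (-1:ℝ) < 1 by norm_num)))
      self_mem_nhdsWithin
  refine ⟨h1, ?_, h3, ?_⟩
  · have key : Tendsto (fun x : ℝ => (1 - x) ^ 2 * (2 / (1 + x) ^ 3)) (𝓝[<] 1) (𝓝 0) := by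
      have hc : Tendsto (fun x : ℝ => (1 - x) ^ 2 * (2 / (1 + x) ^ 3)) (𝓝 1)
          (𝓝 ((1 - 1) ^ 2 * (2 / (1 + 1) ^ 3))) := by
        apply Tendsto.mul
        · exact ((continuous_const.sub continuous_id).pow 2).tendsto 1
        · exact Tendsto.div tendsto_const_nhds
            (((continuous_const.add continuous_id).pow 3).tendsto 1) (by norm_num)
      have : ((1:ℝ) - 1) ^ 2 * (2 / (1 + 1) ^ 3) = 0 := by norm_num
      rw [this] at hc
      exact hc.mono_left nhdsWithin_le_nhds
    refine key.congr' ?_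
    filter_upwards [hmem] with x hx
    rw [h1 x (abs_lt.2 ⟨hx.1, hx.2⟩)]
  · have key : Tendsto (fun x : ℝ => 2 / (1 - x)) (𝓝[<] 1) atTop := by
      have h0 : Tendsto (fun x : ℝ => 1 - x) (𝓝[<] 1) (𝓝[>] 0) := by
        apply tendsto_nhdsWithin_of_tendsto_nhds_of_eventually_within
        · have hc : Tendsto (fun x : ℝ => 1 - x) (𝓝 1) (𝓝 (1 - 1)) :=
            (continuous_const.sub continuous_id).tendsto 1
          rw [sub_self] at hc
          exact hc.mono_left nhdsWithin_le_nhds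
        · filter_upwards [self_mem_nhdsWithin] with x hx
          simp only [Set.mem_Iio] at hx
          simpa using hx
      have := (tendsto_inv_nhdsGT_zero.comp h0).const_mul_atTop (by norm_num : (0:ℝ) < 2)
      simpa [div_eq_mul_inv, Function.comp] using this
    apply key.congr' ?_
    filter_upwards [hmem] with x hx
    rw [h3 x (abs_lt.2 ⟨hx.1, hx.2⟩)]
    have hne : (1 : ℝ) - x ≠ 0 := by
      have := hx.2; intro h; nlinarith
    field_simp
end

section
/- Let 0 → A → B → C → 0 be a short exact sequence of positive chain complexes of R-modules with all homology ranks finite, and set δ𝒮ₙ = (−1)ⁿ·rank(im δₙ₊₁). Then for |x| < min(R(A), R(B), R(C), R(δ𝒮)): (1−x)·∑ₙ (δ𝒮)ₙxⁿ = χ̄(A) − χ̄(B) + χ̄(C), where χ̄(C) = ∑ₙ (−1)ⁿ rank(HₙC) xⁿ. -/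
open CategoryTheory Filter Topology TensorProduct

/-- The rank of an `R`-module `M`: the dimension over the fraction field `Q = Frac(R)`
of `Q ⊗_R M` (by convention `0` if that dimension is infinite). -/
noncomputable def rk (R : Type) [CommRing R] [IsDomain R]
    (M : Type) [AddCommGroup M] [Module R M] : ℕ :=
  Module.finrank (FractionRing R) (TensorProduct R (FractionRing R) M)

section helpers
variable (R : Type) [CommRing R] [IsDomain R]
local notation "Q" => FractionRing R

set_option linter.unusedSectionVars false in
theorem rk_range_eq {M N : Type} [AddCommGroup M] [Module R M] [AddCommGroup N] [Module R N]
    (f : M →ₗ[R] N) :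
    rk R (LinearMap.range f) = Module.finrank Q (LinearMap.range (f.baseChange Q)) := by
  set p := LinearMap.range f
  have hcomp : f = p.subtype ∘ₗ f.rangeRestrict := by ext x; rfl
  have hb : f.baseChange Q = (p.subtype.baseChange Q) ∘ₗ (f.rangeRestrict.baseChange Q) := by
    rw [← LinearMap.baseChange_comp, ← hcomp]
  have hsurj : Function.Surjective (f.rangeRestrict.baseChange Q) := by
    rw [LinearMap.baseChange_eq_ltensor]
    exact LinearMap.lTensor_surjective Q f.surjective_rangeRestrict
  have hinj : Function.Injective (p.subtype.baseChange Q) := by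
    rw [LinearMap.baseChange_eq_ltensor]
    exact Module.Flat.lTensor_preserves_injective_linearMap _ p.injective_subtype
  have hrange : LinearMap.range (f.baseChange Q) = LinearMap.range (p.subtype.baseChange Q) := by
    rw [hb, LinearMap.range_comp, LinearMap.range_eq_top.mpr hsurj, Submodule.map_top]
  rw [rk, hrange]
  exact (LinearEquiv.ofInjective _ hinj).finrank_eq

set_option linter.unusedSectionVars false in
theorem rk_exact {M N P : Type} [AddCommGroup M] [Module R M] [AddCommGroup N] [Module R N]
    [AddCommGroup P] [Module R P] (f : M →ₗ[R] N) (g : N →ₗ[R] P)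
    (h : Function.Exact f g) [Module.Finite Q (TensorProduct R Q N)] :
    rk R (LinearMap.range f) + rk R (LinearMap.range g) = rk R N := by
  rw [rk_range_eq, rk_range_eq]
  have hex : Function.Exact (f.baseChange Q) (g.baseChange Q) := by
    rw [LinearMap.baseChange_eq_ltensor, LinearMap.baseChange_eq_ltensor]
    exact Module.Flat.lTensor_exact Q h
  have hker : LinearMap.ker (g.baseChange Q) = LinearMap.range (f.baseChange Q) :=
    LinearMap.exact_iff.mp hex
  rw [rk, ← hker, add_comm]
  exact LinearMap.finrank_range_add_finrank_ker (g.baseChange Q)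

set_option linter.unusedSectionVars false in
theorem rk_surj {N P : Type} [AddCommGroup N] [Module R N]
    [AddCommGroup P] [Module R P] (g : N →ₗ[R] P) (h : Function.Surjective g) :
    rk R (LinearMap.range g) = rk R P := by
  rw [rk_range_eq]
  have hsurj : Function.Surjective (g.baseChange Q) := by
    rw [LinearMap.baseChange_eq_ltensor]
    exact LinearMap.lTensor_surjective Q h
  rw [rk, LinearMap.range_eq_top.mpr hsurj]
  exact finrank_top Q _
end helpers

/-- The power series identity
`(1−x)·χ̄(δ𝒮) = χ̄(A) − χ̄(B) + χ̄(C)` for a short exact sequence of positive chain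
complexes with finite homology ranks, valid whenever all four series converge
absolutely at `x` (i.e. `|x|` is below all the radii of convergence). -/
theorem stmt_15 (R : Type) [CommRing R] [IsDomain R] [IsNoetherianRing R]
    (S : ShortComplex (ChainComplex (ModuleCat R) ℕ)) (hS : S.ShortExact)
    (hfinA : ∀ n, Module.Finite (FractionRing R)
      (TensorProduct R (FractionRing R) (S.X₁.homology n)))
    (hfinB : ∀ n, Module.Finite (FractionRing R)
      (TensorProduct R (FractionRing R) (S.X₂.homology n)))
    (hfinC : ∀ n, Module.Finite (FractionRing R)
      (TensorProduct R (FractionRing R) (S.X₃.homology n)))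
    (d : ℕ → ℕ)
    (hd : ∀ n, d n = rk R (LinearMap.range ((hS.δ (n + 1) n (by simp)).hom :
      S.X₃.homology (n + 1) →ₗ[R] S.X₁.homology n)))
    (x : ℝ) (hx : |x| < 1)
    (hsA : Summable fun n => (rk R (S.X₁.homology n) : ℝ) * |x| ^ n)
    (hsB : Summable fun n => (rk R (S.X₂.homology n) : ℝ) * |x| ^ n)
    (hsC : Summable fun n => (rk R (S.X₃.homology n) : ℝ) * |x| ^ n)
    (hsd : Summable fun n => (d n : ℝ) * |x| ^ n) :
    (1 - x) * ∑' n, ((-1) ^ n * (d n : ℝ)) * x ^ n =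
      (∑' n, ((-1) ^ n * (rk R (S.X₁.homology n) : ℝ)) * x ^ n) -
      (∑' n, ((-1) ^ n * (rk R (S.X₂.homology n) : ℝ)) * x ^ n) +
      (∑' n, ((-1) ^ n * (rk R (S.X₃.homology n) : ℝ)) * x ^ n) := by
  classical
  set a : ℕ → ℕ := fun n => rk R (S.X₁.homology n) with ha
  set b : ℕ → ℕ := fun n => rk R (S.X₂.homology n) with hb
  set c : ℕ → ℕ := fun n => rk R (S.X₃.homology n) with hc
  -- ranks of ranges of the maps in the long exact sequence
  set e : ℕ → ℕ := fun n => rk R (LinearMap.range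
    ((HomologicalComplex.homologyMap S.f n).hom : S.X₁.homology n →ₗ[R] S.X₂.homology n)) with he
  set f' : ℕ → ℕ := fun n => rk R (LinearMap.range
    ((HomologicalComplex.homologyMap S.g n).hom : S.X₂.homology n →ₗ[R] S.X₃.homology n)) with hf'
  -- piece of the LES at H_n A
  have key1 : ∀ n, d n + e n = a n := fun n => by
    rw [hd n]
    exact rk_exact R _ _
      ((ShortComplex.ShortExact.moduleCat_exact_iff_function_exact _).mp
        (hS.homology_exact₁ (n+1) n (by simp)))
  have key2 : ∀ n, e n + f' n = b n := fun n => by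
    exact rk_exact R _ _
      ((ShortComplex.ShortExact.moduleCat_exact_iff_function_exact _).mp
        (hS.homology_exact₂ n))
  have key3 : ∀ n, f' (n+1) + d n = c (n+1) := fun n => by
    rw [hd n]
    exact rk_exact R _ _
      ((ShortComplex.ShortExact.moduleCat_exact_iff_function_exact _).mp
        (hS.homology_exact₃ (n+1) n (by simp)))
  have key0 : f' 0 = c 0 := by
    have := hS.epi_g
    have h : Epi (HomologicalComplex.homologyMap S.g 0) := by
      apply HomologicalComplex.epi_homologyMap_of_epi_of_not_rel
      intro j hj
      simp [ComplexShape.down_Rel] at hj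
    exact rk_surj R _ ((ModuleCat.epi_iff_surjective _).mp h)
  -- g' n is the shifted d
  set g' : ℕ → ℕ := fun n => Nat.rec 0 (fun m _ => d m) n with hg'
  have hg'0 : g' 0 = 0 := rfl
  have hg's : ∀ n, g' (n+1) = d n := fun n => rfl
  have key : ∀ n, (a n : ℝ) + c n = b n + d n + g' n := by
    intro n
    match n with
    | 0 =>
      have := key1 0; have := key2 0; have h0 := key0
      push_cast [hg'0, ← key1 0, ← key2 0, ← key0]
      ring
    | Nat.succ m =>
      push_cast [hg's m, ← key1 (m+1), ← key2 (m+1), ← key3 m]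
      ring
  -- summability
  have habs : ∀ (u : ℕ → ℕ), (Summable fun n => (u n : ℝ) * |x| ^ n) →
      Summable fun n => ((-1 : ℝ) ^ n * (u n : ℝ)) * x ^ n := by
    intro u hu
    apply Summable.of_norm_bounded hu
    intro n
    have hn : (0:ℝ) ≤ (u n : ℝ) := Nat.cast_nonneg _
    rw [Real.norm_eq_abs, abs_mul, abs_mul, abs_pow, abs_pow, abs_neg, abs_one, one_pow,
      one_mul, abs_of_nonneg hn]
  have SA := habs a hsA
  have SB := habs b hsB
  have SC := habs c hsC
  have SD := habs d hsd
  have SGaux : Summable fun n => ((-1 : ℝ) ^ (n+1) * (g' (n+1) : ℝ)) * x ^ (n+1) := by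
    have : (fun n => ((-1 : ℝ) ^ (n+1) * (g' (n+1) : ℝ)) * x ^ (n+1)) =
        (fun n => (-x) * (((-1 : ℝ) ^ n * (d n : ℝ)) * x ^ n)) := by
      funext n; rw [hg's n]; ring
    rw [this]
    exact SD.mul_left _
  have SG : Summable fun n => ((-1 : ℝ) ^ n * (g' n : ℝ)) * x ^ n :=
    (summable_nat_add_iff 1).mp SGaux
  -- the shifted sum identity
  have hGsum : (∑' n, ((-1 : ℝ) ^ n * (g' n : ℝ)) * x ^ n) =
      (-x) * ∑' n, ((-1 : ℝ) ^ n * (d n : ℝ)) * x ^ n := by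
    rw [Summable.tsum_eq_zero_add SG]
    simp only [hg'0, pow_zero, Nat.cast_zero]
    rw [← tsum_mul_left]
    rw [show ((1:ℝ) * 0) * 1 = 0 by ring, zero_add]
    congr 1
    funext n
    rw [hg's n]; ring
  -- combine
  have hsplit : (∑' n, ((-1 : ℝ) ^ n * (a n : ℝ)) * x ^ n) -
      (∑' n, ((-1 : ℝ) ^ n * (b n : ℝ)) * x ^ n) +
      (∑' n, ((-1 : ℝ) ^ n * (c n : ℝ)) * x ^ n) =
      (∑' n, ((-1 : ℝ) ^ n * (d n : ℝ)) * x ^ n) +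
      (∑' n, ((-1 : ℝ) ^ n * (g' n : ℝ)) * x ^ n) := by
    rw [← Summable.tsum_sub SA SB, ← Summable.tsum_add (SA.sub SB) SC, ← Summable.tsum_add SD SG]
    congr 1
    funext n
    linear_combination ((-1:ℝ)^n * x^n) * key n
  rw [hsplit, hGsum]
  ring
end

section
/- Let 0 → A → B → C → 0 be a short exact sequence of positive chain complexes of R-modules with finite homology ranks. If two of the three complexes A, B, C have homology rank sequence with power-series radius of convergence at least 1, then so does the third. -/
open CategoryTheory Filter Topology

private lemma finrank_le_of_exact {K : Type*} [Field K] {M N P : Type*}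
    [AddCommGroup M] [Module K M] [AddCommGroup N] [Module K N] [AddCommGroup P] [Module K P]
    [Module.Finite K M] [Module.Finite K N] [Module.Finite K P]
    (f : M →ₗ[K] N) (g : N →ₗ[K] P) (h : Function.Exact f g) :
    Module.finrank K N ≤ Module.finrank K M + Module.finrank K P := by
  have h1 : Module.finrank K (LinearMap.range g) + Module.finrank K (LinearMap.ker g)
      = Module.finrank K N := g.finrank_range_add_finrank_ker
  have h2 : LinearMap.ker g = LinearMap.range f := LinearMap.exact_iff.mp h
  have h3 : Module.finrank K (LinearMap.range f) ≤ Module.finrank K M := f.finrank_range_le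
  have h4 : Module.finrank K (LinearMap.range g) ≤ Module.finrank K P :=
    (LinearMap.range g).finrank_le
  rw [h2] at h1
  omega

private lemma rk_le_of_exact (R : Type) [CommRing R] [IsDomain R]
    {M N P : Type} [AddCommGroup M] [Module R M] [AddCommGroup N] [Module R N]
    [AddCommGroup P] [Module R P]
    [Module.Finite (FractionRing R) (TensorProduct R (FractionRing R) M)]
    [Module.Finite (FractionRing R) (TensorProduct R (FractionRing R) N)]
    [Module.Finite (FractionRing R) (TensorProduct R (FractionRing R) P)]
    (f : M →ₗ[R] N) (g : N →ₗ[R] P) (h : Function.Exact f g) :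
    rk R N ≤ rk R M + rk R P := by
  have hex : Function.Exact (f.lTensor (FractionRing R)) (g.lTensor (FractionRing R)) :=
    Module.Flat.lTensor_exact (FractionRing R) h
  have hex' : Function.Exact (f.baseChange (FractionRing R)) (g.baseChange (FractionRing R)) := by
    rw [Function.Exact] at hex ⊢
    simpa only [LinearMap.baseChange_eq_ltensor] using hex
  exact finrank_le_of_exact _ _ hex'

/-- If the signed series converges on `(-1,1)`, then the unsigned one converges on `[0,1)`. -/
private lemma summable_nonneg_of_signed (c : ℕ → ℝ) (hc : ∀ n, 0 ≤ c n)
    (h : ∀ x : ℝ, |x| < 1 → Summable fun n => ((-1) ^ n * c n) * x ^ n)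
    {x : ℝ} (hx0 : 0 ≤ x) (hx1 : x < 1) : Summable fun n => c n * x ^ n := by
  obtain ⟨r, hr0, hrx, hr1⟩ : ∃ r : ℝ, 0 < r ∧ x < r ∧ r < 1 :=
    ⟨(x + 1) / 2, by linarith, by linarith, by linarith⟩
  have hs : Summable fun n => ((-1) ^ n * c n) * r ^ n :=
    h r (by rw [abs_of_pos hr0]; exact hr1)
  have habs : (fun n => |((-1) ^ n * c n) * r ^ n|) = fun n => c n * r ^ n := by
    funext n
    rw [abs_mul, abs_mul, abs_pow, abs_pow, abs_neg, abs_one, one_pow, one_mul,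
      abs_of_nonneg (hc n), abs_of_pos hr0]
  have hb : BddAbove (Set.range fun n => c n * r ^ n) := by
    have h2 : Tendsto (fun n => |((-1) ^ n * c n) * r ^ n|) atTop (𝓝 0) := by
      simpa using hs.tendsto_atTop_zero.abs
    rw [habs] at h2
    exact h2.bddAbove_range
  obtain ⟨C, hC⟩ := hb
  have hCmem : ∀ n, c n * r ^ n ≤ C := fun n => hC (Set.mem_range_self n)
  have hgeo : Summable fun n => C * (x / r) ^ n :=
    (summable_geometric_of_lt_one (by positivity)
      (by rw [div_lt_one hr0]; exact hrx)).mul_left C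
  refine Summable.of_nonneg_of_le (fun n => mul_nonneg (hc n) (pow_nonneg hx0 n)) (fun n => ?_) hgeo
  have hrn : r ^ n ≠ 0 := pow_ne_zero n (ne_of_gt hr0)
  have heq : c n * x ^ n = (c n * r ^ n) * (x / r) ^ n := by
    rw [div_pow]
    field_simp
  rw [heq]
  exact mul_le_mul_of_nonneg_right (hCmem n) (by positivity)

private lemma summable_case_c (a b c : ℕ → ℝ) (hc : ∀ n, 0 ≤ c n)
    (hle : ∀ n, c (n + 1) ≤ b (n + 1) + a n) {x : ℝ} (hx0 : 0 ≤ x)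
    (ha : Summable fun n => a n * x ^ n) (hb : Summable fun n => b n * x ^ n) :
    Summable fun n => c n * x ^ n := by
  rw [← summable_nat_add_iff 1]
  have hb' : Summable fun n => b (n + 1) * x ^ (n + 1) := (summable_nat_add_iff 1).2 hb
  have ha' : Summable fun n => a n * x ^ (n + 1) := by
    have h2 := ha.mul_left x
    have heq : (fun n => a n * x ^ (n + 1)) = fun n => x * (a n * x ^ n) := by
      funext n; ring
    rw [heq]; exact h2
  refine Summable.of_nonneg_of_le (fun n => mul_nonneg (hc (n + 1)) (pow_nonneg hx0 (n + 1))) (fun n => ?_) (hb'.add ha')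
  calc c (n + 1) * x ^ (n + 1) ≤ (b (n + 1) + a n) * x ^ (n + 1) :=
        mul_le_mul_of_nonneg_right (hle n) (pow_nonneg hx0 _)
    _ = b (n + 1) * x ^ (n + 1) + a n * x ^ (n + 1) := by ring

private lemma summable_case_a (a b c : ℕ → ℝ) (ha0 : ∀ n, 0 ≤ a n)
    (hle : ∀ n, a n ≤ c (n + 1) + b n) {x : ℝ} (hx0 : 0 ≤ x)
    (hb : Summable fun n => b n * x ^ n) (hc : Summable fun n => c n * x ^ n) :
    Summable fun n => a n * x ^ n := by
  have hcs : Summable fun n => c (n + 1) * x ^ n := by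
    rcases eq_or_lt_of_le hx0 with h0 | h0
    · refine summable_of_ne_finset_zero (s := {0}) fun n hn => ?_
      have hn0 : n ≠ 0 := by simpa using hn
      rw [← h0, zero_pow hn0, mul_zero]
    · have hxne : x ≠ 0 := ne_of_gt h0
      have h1 : Summable fun n => c (n + 1) * x ^ (n + 1) := (summable_nat_add_iff 1).2 hc
      have h2 := h1.mul_left x⁻¹
      have heq : (fun n => c (n + 1) * x ^ n) = fun n => x⁻¹ * (c (n + 1) * x ^ (n + 1)) := by
        funext n
        rw [pow_succ]
        field_simp
      rw [heq]; exact h2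
  refine Summable.of_nonneg_of_le (fun n => mul_nonneg (ha0 n) (pow_nonneg hx0 n)) (fun n => ?_) (hcs.add hb)
  calc a n * x ^ n ≤ (c (n + 1) + b n) * x ^ n :=
        mul_le_mul_of_nonneg_right (hle n) (pow_nonneg hx0 _)
    _ = c (n + 1) * x ^ n + b n * x ^ n := by ring

private lemma summable_case_b (a b c : ℕ → ℝ) (hb0 : ∀ n, 0 ≤ b n)
    (hle : ∀ n, b n ≤ a n + c n) {x : ℝ} (hx0 : 0 ≤ x)
    (ha : Summable fun n => a n * x ^ n) (hc : Summable fun n => c n * x ^ n) :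
    Summable fun n => b n * x ^ n := by
  refine Summable.of_nonneg_of_le (fun n => mul_nonneg (hb0 n) (pow_nonneg hx0 n)) (fun n => ?_) (ha.add hc)
  calc b n * x ^ n ≤ (a n + c n) * x ^ n :=
        mul_le_mul_of_nonneg_right (hle n) (pow_nonneg hx0 _)
    _ = a n * x ^ n + c n * x ^ n := by ring

/-- Two-out-of-three for radius of convergence at least 1 of the alternating homology
rank series, for a short exact sequence of positive chain complexes with finite
homology ranks. (`RadGe1 X` expresses that the power series `∑ (−1)ⁿ rank(HₙX) xⁿ`
converges for every `|x| < 1`, i.e. has radius of convergence at least 1.) -/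
theorem stmt_17 (R : Type) [CommRing R] [IsDomain R] [IsNoetherianRing R]
    (S : ShortComplex (ChainComplex (ModuleCat R) ℕ)) (hS : S.ShortExact)
    (hfinA : ∀ n, Module.Finite (FractionRing R)
      (TensorProduct R (FractionRing R) (S.X₁.homology n)))
    (hfinB : ∀ n, Module.Finite (FractionRing R)
      (TensorProduct R (FractionRing R) (S.X₂.homology n)))
    (hfinC : ∀ n, Module.Finite (FractionRing R)
      (TensorProduct R (FractionRing R) (S.X₃.homology n)))
    (RadGe1 : ChainComplex (ModuleCat R) ℕ → Prop)
    (hRad : ∀ X : ChainComplex (ModuleCat R) ℕ, RadGe1 X ↔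
      ∀ x : ℝ, |x| < 1 → Summable fun n => ((-1) ^ n * (rk R (X.homology n) : ℝ)) * x ^ n) :
    (RadGe1 S.X₁ ∧ RadGe1 S.X₂ → RadGe1 S.X₃) ∧
    (RadGe1 S.X₁ ∧ RadGe1 S.X₃ → RadGe1 S.X₂) ∧
    (RadGe1 S.X₂ ∧ RadGe1 S.X₃ → RadGe1 S.X₁) := by
  classical
  set a : ℕ → ℝ := fun n => (rk R (S.X₁.homology n) : ℝ) with ha_def
  set b : ℕ → ℝ := fun n => (rk R (S.X₂.homology n) : ℝ) with hb_def
  set c : ℕ → ℝ := fun n => (rk R (S.X₃.homology n) : ℝ) with hc_def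
  have ha0 : ∀ n, 0 ≤ a n := fun n => Nat.cast_nonneg _
  have hb0 : ∀ n, 0 ≤ b n := fun n => Nat.cast_nonneg _
  have hc0 : ∀ n, 0 ≤ c n := fun n => Nat.cast_nonneg _
  -- translate `RadGe1` to summability of the unsigned series on `[0,1)`
  have key : ∀ (X : ChainComplex (ModuleCat R) ℕ), RadGe1 X ↔
      ∀ x : ℝ, 0 ≤ x → x < 1 →
        Summable fun n => (rk R (X.homology n) : ℝ) * x ^ n := by
    intro X
    rw [hRad]
    constructor
    · intro h x hx0 hx1
      exact summable_nonneg_of_signed _ (fun n => Nat.cast_nonneg _) h hx0 hx1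
    · intro h x hx
      have h2 := h |x| (abs_nonneg x) hx
      refine Summable.of_norm_bounded h2 fun n => ?_
      have : ‖((-1 : ℝ) ^ n * (rk R (X.homology n) : ℝ)) * x ^ n‖
          = (rk R (X.homology n) : ℝ) * |x| ^ n := by
        rw [Real.norm_eq_abs, abs_mul, abs_mul, abs_pow, abs_pow, abs_neg, abs_one,
          one_pow, one_mul, Nat.abs_cast]
      rw [this]
  -- the rank inequalities from the long exact homology sequence
  have hrel : ∀ n : ℕ, (ComplexShape.down ℕ).Rel (n + 1) n := fun n => rfl
  have hba : ∀ n, b n ≤ a n + c n := by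
    intro n
    haveI := hfinA n; haveI := hfinB n; haveI := hfinC n
    have hex : Function.Exact (HomologicalComplex.homologyMap S.f n)
        (HomologicalComplex.homologyMap S.g n) :=
      (ShortComplex.ShortExact.moduleCat_exact_iff_function_exact _).mp (hS.homology_exact₂ n)
    have h := rk_le_of_exact R _ _ hex
    simp only [ha_def, hb_def, hc_def]
    exact_mod_cast h
  have hab : ∀ n, a n ≤ c (n + 1) + b n := by
    intro n
    haveI := hfinA n; haveI := hfinB n; haveI := hfinC (n + 1)
    have hex : Function.Exact (hS.δ (n + 1) n (hrel n))
        (HomologicalComplex.homologyMap S.f n) :=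
      (ShortComplex.ShortExact.moduleCat_exact_iff_function_exact _).mp
        (hS.homology_exact₁ (n + 1) n (hrel n))
    have h := rk_le_of_exact R _ _ hex
    simp only [ha_def, hb_def, hc_def]
    exact_mod_cast h
  have hcb : ∀ n, c (n + 1) ≤ b (n + 1) + a n := by
    intro n
    haveI := hfinA n; haveI := hfinB (n + 1); haveI := hfinC (n + 1)
    have hex : Function.Exact (HomologicalComplex.homologyMap S.g (n + 1))
        (hS.δ (n + 1) n (hrel n)) :=
      (ShortComplex.ShortExact.moduleCat_exact_iff_function_exact _).mp
        (hS.homology_exact₃ (n + 1) n (hrel n))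
    have h := rk_le_of_exact R _ _ hex
    simp only [ha_def, hb_def, hc_def]
    exact_mod_cast h
  refine ⟨?_, ?_, ?_⟩
  · rintro ⟨hA, hB⟩
    rw [key] at hA hB ⊢
    intro x hx0 hx1
    exact summable_case_c a b c hc0 hcb hx0 (hA x hx0 hx1) (hB x hx0 hx1)
  · rintro ⟨hA, hC⟩
    rw [key] at hA hC ⊢
    intro x hx0 hx1
    exact summable_case_b a b c hb0 hba hx0 (hA x hx0 hx1) (hC x hx0 hx1)
  · rintro ⟨hB, hC⟩
    rw [key] at hB hC ⊢
    intro x hx0 hx1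
    exact summable_case_a a b c ha0 hab hx0 (hB x hx0 hx1) (hC x hx0 hx1)
end

section
/- Let 0 → A → B → C → 0 be a short exact sequence of positive chain complexes with finite homology ranks, and suppose at least one of the sequences (rank HₙA)ₙ or (rank HₙC)ₙ is of controlled absolute growth. Then the sequence δ𝒮ₙ = (−1)ⁿ rank(im δₙ₊₁) is of controlled absolute growth, i.e. the short exact sequence is A-admissible. -/
open CategoryTheory Filter Topology

/-- A (nonnegative) sequence is of controlled absolute growth: its power series has radius
of convergence at least `1` and `(1−x)²·∑ bₙxⁿ → 0` as `x → 1⁻`. -/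
def ControlledGrowth (b : ℕ → ℝ) : Prop :=
  (∀ x : ℝ, |x| < 1 → Summable fun n => b n * x ^ n) ∧
    Tendsto (fun x : ℝ => (1 - x) ^ 2 * ∑' n, b n * x ^ n) (𝓝[<] 1) (𝓝 0)

section Aux

open Module

variable (R : Type) [CommRing R] [IsDomain R]
  {M N : Type} [AddCommGroup M] [Module R M] [AddCommGroup N] [Module R N]

/-- The rank of the image of a linear map is at most the rank of the domain. -/
theorem rk_range_le_left [Module.Finite (FractionRing R) (TensorProduct R (FractionRing R) M)]
    (f : M →ₗ[R] N) : rk R (LinearMap.range f) ≤ rk R M := by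
  set Q := FractionRing R
  have hsurj : Function.Surjective (f.rangeRestrict.baseChange Q) := by
    rw [LinearMap.baseChange_eq_ltensor]
    exact LinearMap.lTensor_surjective Q f.surjective_rangeRestrict
  calc rk R (LinearMap.range f)
      = finrank Q (⊤ : Submodule Q (TensorProduct R Q (LinearMap.range f))) :=
        (finrank_top _ _).symm
    _ = finrank Q (LinearMap.range (f.rangeRestrict.baseChange Q)) := by
        rw [LinearMap.range_eq_top.2 hsurj]
    _ ≤ rk R M := LinearMap.finrank_range_le _

/-- The rank of the image of a linear map is at most the rank of the codomain;
this uses flatness of the fraction field. -/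
theorem rk_range_le_right [Module.Finite (FractionRing R) (TensorProduct R (FractionRing R) N)]
    (f : M →ₗ[R] N) : rk R (LinearMap.range f) ≤ rk R N := by
  set Q := FractionRing R
  have hinj : Function.Injective ((LinearMap.range f).subtype.baseChange Q) := by
    rw [LinearMap.baseChange_eq_ltensor]
    exact Module.Flat.lTensor_preserves_injective_linearMap _ (Submodule.injective_subtype _)
  exact LinearMap.finrank_le_finrank_of_injective hinj

end Aux

theorem cg_summable_of_le {b d : ℕ → ℝ} (hb : ∀ x : ℝ, |x| < 1 → Summable fun n => b n * x ^ n)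
    (hd0 : ∀ n, 0 ≤ d n) (hdb : ∀ n, d n ≤ b n) {x : ℝ} (hx : |x| < 1) :
    Summable fun n => d n * x ^ n := by
  have hb' : Summable fun n => b n * |x| ^ n := hb |x| (by rwa [abs_abs])
  refine Summable.of_abs (Summable.of_nonneg_of_le (fun n => abs_nonneg _) (fun n => ?_) hb')
  rw [abs_mul, abs_pow, abs_of_nonneg (hd0 n)]
  exact mul_le_mul_of_nonneg_right (hdb n) (pow_nonneg (abs_nonneg x) n)

/-- A nonnegative sequence dominated by a sequence of controlled growth has
controlled growth. -/
theorem cg_of_le {b d : ℕ → ℝ} (hb : ControlledGrowth b)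
    (hd0 : ∀ n, 0 ≤ d n) (hdb : ∀ n, d n ≤ b n) : ControlledGrowth d := by
  refine ⟨fun x hx => cg_summable_of_le hb.1 hd0 hdb hx, ?_⟩
  have hmem : Set.Ioo (0:ℝ) 1 ∈ 𝓝[<] (1:ℝ) :=
    Ioo_mem_nhdsLT_of_mem (by constructor <;> norm_num)
  refine tendsto_of_tendsto_of_tendsto_of_le_of_le' tendsto_const_nhds hb.2
    (Filter.eventually_of_mem hmem fun x hx => ?_)
    (Filter.eventually_of_mem hmem fun x hx => ?_)
  · exact mul_nonneg (sq_nonneg _) (tsum_nonneg fun n =>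
      mul_nonneg (hd0 n) (pow_nonneg hx.1.le n))
  · refine mul_le_mul_of_nonneg_left ?_ (sq_nonneg _)
    have hxabs : |x| < 1 := by rw [abs_of_nonneg hx.1.le]; exact hx.2
    exact Summable.tsum_le_tsum (fun n => mul_le_mul_of_nonneg_right (hdb n) (pow_nonneg hx.1.le n))
      (cg_summable_of_le hb.1 hd0 hdb hxabs) (hb.1 x hxabs)

set_option maxHeartbeats 1000000 in
/-- The shift of a sequence of controlled growth has controlled growth. -/
theorem cg_shift {b : ℕ → ℝ} (hb : ControlledGrowth b) :
    ControlledGrowth (fun n => b (n + 1)) := by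
  have hsum : ∀ x : ℝ, |x| < 1 → Summable fun n => b (n + 1) * x ^ n := by
    intro x hx
    rcases eq_or_ne x 0 with rfl | hx0
    · apply summable_of_ne_finset_zero (s := {0})
      intro n hn
      simp [zero_pow (by simpa using hn)]
    · have h1 : Summable fun n => b (n + 1) * x ^ (n + 1) :=
        (summable_nat_add_iff 1).2 (hb.1 x hx)
      have := h1.mul_right x⁻¹
      refine this.congr fun n => ?_
      field_simp [pow_succ]
      ring
  refine ⟨hsum, ?_⟩
  have hF : Tendsto (fun x : ℝ => ((1 - x) ^ 2 * ∑' n, b n * x ^ n - (1 - x) ^ 2 * b 0) / x)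
      (𝓝[<] 1) (𝓝 0) := by
    have h2 : Tendsto (fun x : ℝ => (1 - x) ^ 2 * b 0) (𝓝[<] 1) (𝓝 0) := by
      have hc : Continuous (fun x : ℝ => (1 - x) ^ 2 * b 0) :=
        (((continuous_const.sub continuous_id).pow 2).mul continuous_const)
      have := (hc.tendsto 1).mono_left (nhdsWithin_le_nhds (s := Set.Iio 1))
      simpa using this
    have hx1 : Tendsto (fun x : ℝ => x) (𝓝[<] 1) (𝓝 1) :=
      tendsto_id.mono_left nhdsWithin_le_nhds
    have := ((hb.2.sub h2).div hx1 one_ne_zero)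
    simp at this
    exact this
  refine hF.congr' ?_
  have hmem : Set.Ioo (0:ℝ) 1 ∈ 𝓝[<] (1:ℝ) :=
    Ioo_mem_nhdsLT_of_mem (by constructor <;> norm_num)
  filter_upwards [hmem] with x hx
  have hxabs : |x| < 1 := by rw [abs_of_nonneg hx.1.le]; exact hx.2
  have hS : Summable fun n => b n * x ^ n := hb.1 x hxabs
  have key : (∑' n, b n * x ^ n) = b 0 + x * ∑' n, b (n + 1) * x ^ n := by
    rw [Summable.tsum_eq_zero_add hS]
    rw [← tsum_mul_left]
    congr 1
    · simp
    · exact tsum_congr fun n => by ring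
  rw [key, div_eq_iff (ne_of_gt hx.1)]
  ring

/-- If in a short exact sequence of positive chain complexes with finite homology ranks
one of the homology rank sequences of `A` or `C` is of controlled absolute growth, then
so is the connecting-homomorphism sequence `δ𝒮ₙ = (−1)ⁿ rank(im δₙ₊₁)`; that is, the
short exact sequence is A-admissible. -/
theorem stmt_18 (R : Type) [CommRing R] [IsDomain R] [IsNoetherianRing R]
    (S : ShortComplex (ChainComplex (ModuleCat R) ℕ)) (hS : S.ShortExact)
    (hfinA : ∀ n, Module.Finite (FractionRing R)
      (TensorProduct R (FractionRing R) (S.X₁.homology n)))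
    (hfinC : ∀ n, Module.Finite (FractionRing R)
      (TensorProduct R (FractionRing R) (S.X₃.homology n)))
    (d : ℕ → ℕ)
    (hd : ∀ n, d n = rk R (LinearMap.range ((hS.δ (n + 1) n (by simp)).hom :
      S.X₃.homology (n + 1) →ₗ[R] S.X₁.homology n)))
    (h : ControlledGrowth (fun n => (rk R (S.X₁.homology n) : ℝ)) ∨
         ControlledGrowth (fun n => (rk R (S.X₃.homology n) : ℝ))) :
    ControlledGrowth (fun n => (d n : ℝ)) := by
  rcases h with hA | hC
  · refine cg_of_le hA (fun n => by positivity) fun n => ?_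
    rw [hd n]
    haveI := hfinA n
    exact_mod_cast rk_range_le_right R _
  · refine cg_of_le (cg_shift hC) (fun n => by positivity) fun n => ?_
    rw [hd n]
    haveI := hfinC (n + 1)
    exact_mod_cast rk_range_le_left R _
end

section
/- Let C be a positive chain complex of finitely generated R-modules such that (1−x)²·∑ₙ (−1)ⁿrank(BₙC)xⁿ → 0 as x → 1⁻, where BₙC = im(dₙ₊₁). Then the alternating homology rank sequence (HC)ₙ = (−1)ⁿrank HₙC possesses an Abel limit if and only if the alternating chain rank sequence (RC)ₙ = (−1)ⁿrank Cₙ does, and in that case A-lim HC = A-lim RC. Key identity: rank BₙC + rank Bₙ₋₁C + rank HₙC = rank Cₙ for all n (with B₋₁C = 0). -/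
open CategoryTheory Filter Topology

section AuxRank

variable (R : Type) [CommRing R] [IsDomain R]

lemma rk_congr {M N : Type} [AddCommGroup M] [Module R M] [AddCommGroup N] [Module R N]
    (e : M ≃ₗ[R] N) : rk R M = rk R N :=
  (e.baseChange R (FractionRing R) : _).finrank_eq

lemma rk_quotient_add (M : Type) [AddCommGroup M] [Module R M] [Module.Finite R M]
    (N : Submodule R M) : rk R N + rk R (M ⧸ N) = rk R M := by
  set Q := FractionRing R
  have hflat : Module.Flat R Q := Localization.flat R (nonZeroDivisors R)
  have hinj : Function.Injective (N.subtype.baseChange Q) := by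
    rw [LinearMap.baseChange_eq_ltensor]
    exact Module.Flat.lTensor_preserves_injective_linearMap _ N.injective_subtype
  have hsurj : Function.Surjective (N.mkQ.baseChange Q) := by
    rw [LinearMap.baseChange_eq_ltensor]
    exact LinearMap.lTensor_surjective Q (Submodule.mkQ_surjective N)
  have hex : Function.Exact (N.subtype.baseChange Q) (N.mkQ.baseChange Q) := by
    rw [LinearMap.baseChange_eq_ltensor, LinearMap.baseChange_eq_ltensor]
    exact Module.Flat.lTensor_exact Q (LinearMap.exact_subtype_mkQ N)
  have h1 := LinearMap.finrank_range_add_finrank_ker (N.mkQ.baseChange Q)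
  rw [LinearMap.range_eq_top.mpr hsurj, finrank_top, hex.linearMap_ker_eq,
    LinearMap.finrank_range_of_inj hinj] at h1
  simp only [rk, Q] at h1 ⊢
  omega

lemma rk_rank_nullity {M N : Type} [AddCommGroup M] [Module R M] [Module.Finite R M]
    [AddCommGroup N] [Module R N] (f : M →ₗ[R] N) :
    rk R (LinearMap.ker f) + rk R (LinearMap.range f) = rk R M := by
  rw [rk_congr R f.quotKerEquivRange.symm, rk_quotient_add]

lemma rk_bot (M : Type) [AddCommGroup M] [Module R M] [Module.Finite R M] :
    rk R (⊥ : Submodule R M) = 0 := by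
  have h1 := rk_quotient_add R M ⊥
  have h2 : rk R (M ⧸ (⊥ : Submodule R M)) = rk R M :=
    rk_congr R (Submodule.quotEquivOfEqBot _ rfl)
  omega

end AuxRank

section AuxComplex

variable (R : Type) [CommRing R] [IsDomain R] [IsNoetherianRing R]
  (C : ChainComplex (ModuleCat R) ℕ)

lemma rank_identity (hfg : ∀ n, Module.Finite R (C.X n)) (n : ℕ) :
    rk R (LinearMap.range ((C.d (n+1) n).hom : C.X (n+1) →ₗ[R] C.X n))
      + rk R (LinearMap.range (C.sc n).g.hom) + rk R (C.homology n) = rk R (C.X n) := by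
  haveI := hfg n
  haveI : Module.Finite R ((C.sc n).X₂ : Type) := hfg n
  haveI : Module.Finite R (LinearMap.ker (C.sc n).g.hom) :=
    Module.Finite.iff_fg.mpr (IsNoetherian.noetherian _)
  have h1 : rk R (LinearMap.ker (C.sc n).g.hom) + rk R (LinearMap.range (C.sc n).g.hom)
      = rk R (C.X n) :=
    rk_rank_nullity R ((C.sc n).g.hom : C.X n →ₗ[R] ((C.sc n).X₃ : Type))
  have h2 := rk_quotient_add R (LinearMap.ker (C.sc n).g.hom)
    (LinearMap.range (C.sc n).moduleCatToCycles)
  have h3 : rk R (C.homology n)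
      = rk R ((LinearMap.ker (C.sc n).g.hom) ⧸ (LinearMap.range (C.sc n).moduleCatToCycles)) :=
    rk_congr R ((C.sc n).moduleCatHomologyIso.toLinearEquiv)
  have hmap : Submodule.map (LinearMap.ker (C.sc n).g.hom).subtype
      (LinearMap.range (C.sc n).moduleCatToCycles) = LinearMap.range (C.sc n).f.hom := by
    ext x
    simp only [Submodule.mem_map, LinearMap.mem_range]
    constructor
    · rintro ⟨y, ⟨a, rfl⟩, rfl⟩; exact ⟨a, rfl⟩
    · rintro ⟨a, rfl⟩; exact ⟨(C.sc n).moduleCatToCycles a, ⟨a, rfl⟩, rfl⟩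
  have hfr : LinearMap.range (C.sc n).f.hom = LinearMap.range (C.d (n+1) n).hom := by
    have h : (C.sc n).f = C.dTo n := rfl
    have rel : (ComplexShape.down ℕ).Rel (n+1) n := rfl
    rw [h, C.dTo_eq rel]
    show LinearMap.range ((C.d (n+1) n).hom.comp _) = _
    exact LinearMap.range_comp_of_range_eq_top _ (LinearMap.range_eq_top.mpr
      (ConcreteCategory.bijective_of_isIso (C.xPrevIso rel).hom).2)
  have h4 : rk R (LinearMap.range (C.sc n).moduleCatToCycles)
      = rk R (LinearMap.range ((C.d (n+1) n).hom : C.X (n+1) →ₗ[R] C.X n)) := by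
    rw [rk_congr R (Submodule.equivMapOfInjective (LinearMap.ker (C.sc n).g.hom).subtype
      (Submodule.injective_subtype _) (LinearMap.range (C.sc n).moduleCatToCycles)), hmap, hfr]
    rfl
  omega

lemma rk_scg_zero (hfg : ∀ n, Module.Finite R (C.X n)) :
    rk R (LinearMap.range (C.sc 0).g.hom) = 0 := by
  haveI : Module.Finite R ((C.sc 0).X₃ : Type) := hfg _
  have h : (C.sc 0).g = C.dFrom 0 := rfl
  rw [show (C.sc 0).g = 0 from h.trans (C.dFrom_eq_zero (by simp)), ModuleCat.hom_zero, LinearMap.range_zero]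
  exact rk_bot R _

lemma rk_scg_succ (m : ℕ) :
    rk R (LinearMap.range (C.sc (m+1)).g.hom)
      = rk R (LinearMap.range ((C.d (m+1) m).hom : C.X (m+1) →ₗ[R] C.X m)) := by
  have h : (C.sc (m+1)).g = C.dFrom (m+1) := rfl
  have rel : (ComplexShape.down ℕ).Rel (m+1) m := rfl
  rw [h, C.dFrom_eq rel]
  show rk R (LinearMap.range (LinearMap.comp (C.xNextIso rel).inv.hom
    (C.d (m+1) m).hom)) = _
  have h5 : LinearMap.range (LinearMap.comp (C.xNextIso rel).inv.hom (C.d (m+1) m).hom)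
      = Submodule.map (C.xNextIso rel).inv.hom
        (LinearMap.range ((C.d (m+1) m).hom : C.X (m+1) →ₗ[R] C.X m)) :=
    LinearMap.range_comp _ _
  rw [h5]
  exact (rk_congr R (Submodule.equivMapOfInjective _
    (ConcreteCategory.bijective_of_isIso (C.xNextIso rel).inv).1
    (LinearMap.range (C.d (m+1) m).hom))).symm

end AuxComplex

/-- For a positive chain complex `C` of finitely generated modules over a commutative
noetherian integral domain whose boundary rank sequence satisfies
`(1−x)²·∑ (−1)ⁿ rank(BₙC) xⁿ → 0` as `x → 1⁻`, the alternating homology rank sequence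
has an Abel limit iff the alternating chain rank sequence does, with the same limit;
moreover `rank BₙC + rank Bₙ₋₁C + rank HₙC = rank Cₙ` for all `n` (with `B₋₁C = 0`). -/
theorem stmt_19 (R : Type) [CommRing R] [IsDomain R] [IsNoetherianRing R]
    (C : ChainComplex (ModuleCat R) ℕ) (hfg : ∀ n, Module.Finite R (C.X n))
    (BC HC RC : ℕ → ℕ)
    (hBC : ∀ n, BC n = rk R (LinearMap.range ((C.d (n + 1) n).hom : C.X (n + 1) →ₗ[R] C.X n)))
    (hHC : ∀ n, HC n = rk R (C.homology n))
    (hRC : ∀ n, RC n = rk R (C.X n))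
    (hrB : ∀ x : ℝ, |x| < 1 → Summable fun n => ((-1) ^ n * (BC n : ℝ)) * x ^ n)
    (hB : Tendsto (fun x : ℝ => (1 - x) ^ 2 * ∑' n, ((-1) ^ n * (BC n : ℝ)) * x ^ n)
      (𝓝[<] 1) (𝓝 0)) :
    (∀ n : ℕ, BC n + (if n = 0 then 0 else BC (n - 1)) + HC n = RC n) ∧
    ∀ L : ℝ, HasAbelLim (fun n => (-1) ^ n * (HC n : ℝ)) L ↔
      HasAbelLim (fun n => (-1) ^ n * (RC n : ℝ)) L := by
  have part1 : ∀ n : ℕ, BC n + (if n = 0 then 0 else BC (n - 1)) + HC n = RC n := by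
    intro n
    have key := rank_identity R C hfg n
    rcases n with _ | m
    · rw [hBC, hHC, hRC, if_pos rfl]
      have h0 := rk_scg_zero R C hfg
      omega
    · rw [hBC, hHC, hRC, if_neg (Nat.succ_ne_zero m)]
      have hs := rk_scg_succ R C m
      have hm := hBC m
      simp only [Nat.succ_sub_one]
      omega
  refine ⟨part1, fun L => ?_⟩
  -- the real sequences
  set b : ℕ → ℝ := fun n => (-1) ^ n * (BC n : ℝ) with hb_def
  set b' : ℕ → ℝ := fun n => if n = 0 then 0 else (-1) ^ (n - 1) * (BC (n - 1) : ℝ) with hb'_def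
  have hkey : ∀ n : ℕ, ((-1 : ℝ)) ^ n * (HC n : ℝ)
      = (-1) ^ n * (RC n : ℝ) - b n + b' n := by
    intro n
    rcases n with _ | m
    · have hc : (BC 0 : ℝ) + (HC 0 : ℝ) = (RC 0 : ℝ) := by
        have := part1 0; simp only [if_pos rfl] at this; exact_mod_cast congrArg (Nat.cast : ℕ → ℝ) this
      simp only [hb_def, hb'_def, if_pos rfl, pow_zero]
      linarith
    · have h := part1 (m + 1)
      rw [if_neg (Nat.succ_ne_zero m)] at h
      have hc : (BC (m+1) : ℝ) + (BC m : ℝ) + (HC (m+1) : ℝ) = (RC (m+1) : ℝ) := by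
        exact_mod_cast congrArg (Nat.cast : ℕ → ℝ) h
      simp only [hb_def, hb'_def, if_neg (Nat.succ_ne_zero m), Nat.succ_sub_one]
      linear_combination (-((-1 : ℝ)) ^ m) * hc
  -- summability of the shifted boundary sequence
  have hb'sum : ∀ x : ℝ, |x| < 1 → Summable (fun n => b' n * x ^ n) := by
    intro x hx
    rw [← summable_nat_add_iff 1]
    refine ((hrB x hx).mul_right x).congr fun n => ?_
    simp only [hb'_def, Nat.succ_ne_zero, if_neg, if_false, Nat.succ_sub_one, pow_succ]
    ring
  have hb'tsum : ∀ x : ℝ, |x| < 1 → ∑' n, b' n * x ^ n = x * ∑' n, b n * x ^ n := by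
    intro x hx
    rw [Summable.tsum_eq_zero_add (hb'sum x hx)]
    have h0 : b' 0 * x ^ 0 = 0 := by simp [hb'_def]
    rw [h0, zero_add, ← tsum_mul_left]
    refine tsum_congr fun n => ?_
    simp only [hb'_def, Nat.succ_ne_zero, if_neg, if_false, Nat.succ_sub_one, pow_succ]
    ring
  -- transfer of summability
  have hsum_iff : ∀ x : ℝ, |x| < 1 →
      (Summable (fun n => ((-1 : ℝ)) ^ n * (HC n : ℝ) * x ^ n) ↔
        Summable (fun n => ((-1 : ℝ)) ^ n * (RC n : ℝ) * x ^ n)) := by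
    intro x hx
    constructor
    · intro hH
      refine (((hH.add (hrB x hx)).sub (hb'sum x hx)).congr fun n => ?_)
      have := hkey n; linear_combination (x ^ n) * this
    · intro hR
      refine (((hR.sub (hrB x hx)).add (hb'sum x hx)).congr fun n => ?_)
      have := hkey n; linear_combination (-(x ^ n)) * this
  -- tsum identity
  have htsum : ∀ x : ℝ, |x| < 1 →
      Summable (fun n => ((-1 : ℝ)) ^ n * (RC n : ℝ) * x ^ n) →
      (1 - x) * ∑' n, ((-1 : ℝ)) ^ n * (HC n : ℝ) * x ^ n
        = (1 - x) * (∑' n, ((-1 : ℝ)) ^ n * (RC n : ℝ) * x ^ n)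
          - (1 - x) ^ 2 * ∑' n, b n * x ^ n := by
    intro x hx hR
    have hH : ∑' n, ((-1 : ℝ)) ^ n * (HC n : ℝ) * x ^ n
        = ∑' n, (((-1 : ℝ)) ^ n * (RC n : ℝ) * x ^ n - b n * x ^ n + b' n * x ^ n) := by
      refine tsum_congr fun n => ?_
      have := hkey n; linear_combination (x ^ n) * this
    rw [hH, Summable.tsum_add ((hR.sub (hrB x hx))) (hb'sum x hx), Summable.tsum_sub hR (hrB x hx),
      hb'tsum x hx]
    ring
  -- now the equivalence of Abel limits
  have hmem : Set.Ioo (0 : ℝ) 1 ∈ 𝓝[<] (1 : ℝ) :=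
    Ioo_mem_nhdsLT_of_mem (by constructor <;> norm_num)
  have habs : ∀ x ∈ Set.Ioo (0 : ℝ) 1, |x| < 1 := fun x hx =>
    abs_lt.mpr ⟨by linarith [hx.1], hx.2⟩
  constructor
  · rintro ⟨hHsum, hHlim⟩
    have hRsum : ∀ x : ℝ, |x| < 1 → Summable fun n => ((-1 : ℝ)) ^ n * (RC n : ℝ) * x ^ n :=
      fun x hx => (hsum_iff x hx).1 (hHsum x hx)
    refine ⟨hRsum, ?_⟩
    have hev : (fun x : ℝ => (1 - x) * ∑' n, ((-1 : ℝ)) ^ n * (RC n : ℝ) * x ^ n) =ᶠ[𝓝[<] 1]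
        (fun x : ℝ => (1 - x) * (∑' n, ((-1 : ℝ)) ^ n * (HC n : ℝ) * x ^ n)
          + (1 - x) ^ 2 * ∑' n, b n * x ^ n) := by
      filter_upwards [hmem] with x hx
      have := htsum x (habs x hx) (hRsum x (habs x hx))
      linarith
    have : Tendsto (fun x : ℝ => (1 - x) * (∑' n, ((-1 : ℝ)) ^ n * (HC n : ℝ) * x ^ n)
        + (1 - x) ^ 2 * ∑' n, b n * x ^ n) (𝓝[<] 1) (𝓝 (L + 0)) := hHlim.add hB
    rw [add_zero] at this
    exact this.congr' hev.symm
  · rintro ⟨hRsum, hRlim⟩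
    have hHsum : ∀ x : ℝ, |x| < 1 → Summable fun n => ((-1 : ℝ)) ^ n * (HC n : ℝ) * x ^ n :=
      fun x hx => (hsum_iff x hx).2 (hRsum x hx)
    refine ⟨hHsum, ?_⟩
    have hev : (fun x : ℝ => (1 - x) * ∑' n, ((-1 : ℝ)) ^ n * (HC n : ℝ) * x ^ n) =ᶠ[𝓝[<] 1]
        (fun x : ℝ => (1 - x) * (∑' n, ((-1 : ℝ)) ^ n * (RC n : ℝ) * x ^ n)
          - (1 - x) ^ 2 * ∑' n, b n * x ^ n) := by
      filter_upwards [hmem] with x hx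
      exact htsum x (habs x hx) (hRsum x (habs x hx))
    have : Tendsto (fun x : ℝ => (1 - x) * (∑' n, ((-1 : ℝ)) ^ n * (RC n : ℝ) * x ^ n)
        - (1 - x) ^ 2 * ∑' n, b n * x ^ n) (𝓝[<] 1) (𝓝 (L - 0)) := hRlim.sub hB
    rw [sub_zero] at this
    exact this.congr' hev.symm
end
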